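/- In the plant allocation problem, if λ₁ = λ₂ on an open interval I (singular arc), then on I: λ₂ satisfies λ₂ = -1/x₂, hence λ₂' = -λ₂, so λ₂(t) = A·e^{-t} with A = -e^{t₁}/x₂(t₁) where t₁ is the start of I. -/

import Mathlib

/-- Plant problem singular arc: if λ₁ = λ₂ on the interval I = [t₁, t₂), then on
I we have λ₂ = -1/x₂, λ₂' = -λ₂, and λ₂(t) = A·e^{-t} with A = -e^{t₁}/x₂(t₁). -/
theorem plant_singular_adjoint (t₁ t₂ : ℝ) (ht : t₁ < t₂)
    (x₂ lam1 lam2 u : ℝ → ℝ)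
    (hx₂ : ∀ t ∈ Set.Ico t₁ t₂, x₂ t ≠ 0)
    (hl1 : ∀ t ∈ Set.Ico t₁ t₂,
      HasDerivWithinAt lam1 ((lam2 t - lam1 t) * u t - lam2 t) (Set.Ico t₁ t₂) t)
    (hl2 : ∀ t ∈ Set.Ico t₁ t₂,
      HasDerivWithinAt lam2 (1 / x₂ t) (Set.Ico t₁ t₂) t)
    (hsing : ∀ t ∈ Set.Ico t₁ t₂, lam1 t = lam2 t) :
    ∀ t ∈ Set.Ico t₁ t₂,
      lam2 t = -1 / x₂ t ∧
      HasDerivWithinAt lam2 (-(lam2 t)) (Set.Ico t₁ t₂) t ∧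
      lam2 t = (-(Real.exp t₁) / x₂ t₁) * Real.exp (-t) := by
  set s := Set.Ico t₁ t₂ with hs
  have hud : UniqueDiffOn ℝ s := uniqueDiffOn_Ico t₁ t₂
  -- lam2 has derivative -(lam2 t) within s at each t (via lam1 ≡ lam2)
  have hder : ∀ t ∈ s, HasDerivWithinAt lam2 (-(lam2 t)) s t := by
    intro t htI
    have h1 := (hl1 t htI).congr (fun x hx => (hsing x hx).symm) (hsing t htI).symm
    simpa [hsing t htI] using h1
  -- equality of the two derivatives gives lam2 = -1/x₂
  have key : ∀ t ∈ s, lam2 t = -1 / x₂ t := by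
    intro t htI
    have e1 := (hder t htI).derivWithin (hud t htI)
    have e2 := (hl2 t htI).derivWithin (hud t htI)
    have : -(lam2 t) = 1 / x₂ t := by rw [← e1, ← e2]
    have := congrArg Neg.neg this
    simpa [neg_div] using this
  -- g(t) = lam2 t * exp t has zero derivative within s
  have hg : ∀ t ∈ s, HasDerivWithinAt (fun r => lam2 r * Real.exp r) 0 s t := by
    intro t htI
    have he : HasDerivWithinAt Real.exp (Real.exp t) s t :=
      (Real.hasDerivAt_exp t).hasDerivWithinAt
    have : HasDerivWithinAt (fun r => lam2 r * Real.exp r)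
        (-lam2 t * Real.exp t + lam2 t * Real.exp t) s t := (hder t htI).mul he
    convert this using 1
    ring
  have hconv : Convex ℝ s := convex_Ico t₁ t₂
  have hdiff : DifferentiableOn ℝ (fun r => lam2 r * Real.exp r) s :=
    fun t htI => ((hg t htI).differentiableWithinAt)
  have hconst : ∀ t ∈ s, lam2 t * Real.exp t = lam2 t₁ * Real.exp t₁ := by
    intro t htI
    have ht₁ : t₁ ∈ s := by simp [hs, Set.mem_Ico, le_refl, ht]
    refine hconv.is_const_of_fderivWithin_eq_zero hdiff (fun z hz => ?_) htI ht₁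
    have := (hg z hz).hasFDerivWithinAt.fderivWithin (hud z hz)
    rw [this]
    ext
    simp
  intro t htI
  have ht₁ : t₁ ∈ s := by simp [hs, Set.mem_Ico, le_refl, ht]
  refine ⟨key t htI, hder t htI, ?_⟩
  have hc := hconst t htI
  have hx : x₂ t₁ ≠ 0 := hx₂ t₁ ht₁
  have hl : lam2 t₁ = -1 / x₂ t₁ := key t₁ ht₁
  have hexp : Real.exp t ≠ 0 := (Real.exp_pos t).ne'
  rw [hl] at hc
  rw [Real.exp_neg]
  field_simp at hc ⊢
  linarith [hc]
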